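/- Let 1 ≤ p < ∞, let ψ ∈ C_c(ℝ) be a continuous compactly supported function, and let a > 0. Then ‖ψ(·) cos(λ·)‖_{L^p(ℝ)} → (π^{-1} ∫_0^π |cos x|^p dx)^{1/p} ‖ψ‖_{L^p(ℝ)} as λ → ∞. -/

import Mathlib

noncomputable section
open MeasureTheory Filter Topology Real Set
open scoped FourierTransform

namespace Stmt4Aux

instance : Fact ((0:ℝ) < π) := ⟨Real.pi_pos⟩

/-- Riemann-Lebesgue: oscillation against a nonzero fourier mode tends to zero. -/
lemma rl (f : ℝ → ℂ) (hf : Integrable f) {n : ℤ} (hn : n ≠ 0) :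
    Tendsto (fun l : ℝ => ∫ x : ℝ, f x * (fourier (T := π) n (l * x : ℝ) : ℂ)) atTop (𝓝 0) := by
  have h1 := Real.tendsto_integral_exp_smul_cocompact f
  have hc : (-(n : ℝ) / π) ≠ 0 := by
    simp [Real.pi_ne_zero, hn]
  have hsub : atBot ⊔ atTop ≤ cocompact ℝ := by rw [cocompact_eq_atBot_atTop]
  have h2 : Tendsto (fun l : ℝ => -(n : ℝ) / π * l) atTop (cocompact ℝ) := by
    rcases hc.lt_or_gt with h | h
    · exact (Tendsto.const_mul_atTop_of_neg h tendsto_id).mono_right (le_sup_left.trans hsub)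
    · exact (Tendsto.const_mul_atTop h tendsto_id).mono_right (le_sup_right.trans hsub)
  have h3 := h1.comp h2
  refine h3.congr fun l => ?_
  refine integral_congr_ae (Eventually.of_forall fun v => ?_)
  simp only [Function.comp]
  simp only [Circle.smul_def, Real.fourierChar_apply, fourier_coe_apply, smul_eq_mul]
  rw [mul_comm _ (f v)]
  congr 2
  push_cast
  field_simp

lemma integral_fourier_eq_zero {n : ℤ} (hn : n ≠ 0) :
    ∫ u : AddCircle π, (fourier n u : ℂ) = 0 :=
  integral_eq_zero_of_add_right_eq_neg (fourier_add_half_inv_index hn Real.pi_pos)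

lemma integral_fourier_zero :
    ∫ u : AddCircle π, (fourier 0 u : ℂ) = (π : ℂ) := by
  have : (fun u : AddCircle π => (fourier 0 u : ℂ)) = fun _ => (1 : ℂ) := by
    funext u; exact fourier_zero
  rw [this, integral_const, measureReal_def, AddCircle.measure_univ, ENNReal.toReal_ofReal Real.pi_pos.le,
    Complex.real_smul, mul_one]

/-- Integrability of the oscillating products. -/
lemma int_mul (f : ℝ → ℂ) (hf : Continuous f) (hfs : HasCompactSupport f)
    (G : C(AddCircle π, ℂ)) (l : ℝ) :
    Integrable (fun x : ℝ => f x * G (l * x : ℝ)) := by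
  refine Continuous.integrable_of_hasCompactSupport ?_ (hfs.mul_right)
  exact hf.mul (G.continuous.comp ((AddCircle.continuous_mk' π).comp
    (continuous_const.mul continuous_id)))

lemma int_circle (G : C(AddCircle π, ℂ)) : Integrable (G : AddCircle π → ℂ) :=
  G.continuous.integrable_of_hasCompactSupport (HasCompactSupport.of_compactSpace _)

/-- Key lemma, complex version. -/
lemma keyC (f : ℝ → ℂ) (hf : Continuous f) (hfs : HasCompactSupport f)
    (F : C(AddCircle π, ℂ)) :
    Tendsto (fun l : ℝ => ∫ x : ℝ, f x * F (l * x : ℝ)) atTop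
      (𝓝 (((∫ u : AddCircle π, F u) / π) * ∫ x : ℝ, f x)) := by
  have hfi : Integrable f := hf.integrable_of_hasCompactSupport hfs
  set P : C(AddCircle π, ℂ) → Prop := fun G =>
    Tendsto (fun l : ℝ => ∫ x : ℝ, f x * G (l * x : ℝ)) atTop
      (𝓝 (((∫ u : AddCircle π, G u) / π) * ∫ x : ℝ, f x)) with hP
  have hspan : ∀ G ∈ Submodule.span ℂ (Set.range (@fourier π)), P G := by
    intro G hG
    induction hG using Submodule.span_induction with
    | mem G hG =>
      obtain ⟨n, rfl⟩ := hG
      by_cases hn : n = 0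
      · subst hn
        rw [hP]
        simp only [integral_fourier_zero]
        have h1 : ((π : ℂ) / π) * ∫ x : ℝ, f x = ∫ x : ℝ, f x := by
          rw [div_self (by exact_mod_cast Real.pi_ne_zero), one_mul]
        rw [h1]
        have h2 : (fun l : ℝ => ∫ x : ℝ, f x * fourier (T := π) 0 (l * x : ℝ)) =
            fun _ : ℝ => ∫ x : ℝ, f x := by
          funext l
          refine integral_congr_ae (Eventually.of_forall fun x => ?_)
          simp [fourier_zero]
        rw [h2]
        exact tendsto_const_nhds
      · rw [hP]
        simp only [integral_fourier_eq_zero hn, zero_div, zero_mul]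
        exact rl f hfi hn
    | zero =>
      rw [hP]
      simp only [ContinuousMap.zero_apply, mul_zero, integral_zero, zero_div, zero_mul]
      exact tendsto_const_nhds
    | add G₁ G₂ _ _ h₁ h₂ =>
      rw [hP] at h₁ h₂ ⊢
      have := h₁.add h₂
      have heq : (fun l : ℝ => (∫ x : ℝ, f x * G₁ (l * x : ℝ)) +
          ∫ x : ℝ, f x * G₂ (l * x : ℝ)) =
          fun l : ℝ => ∫ x : ℝ, f x * (G₁ + G₂) (l * x : ℝ) := by
        funext l
        rw [← integral_add (int_mul f hf hfs G₁ l) (int_mul f hf hfs G₂ l)]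
        refine integral_congr_ae (Eventually.of_forall fun x => ?_)
        simp [ContinuousMap.add_apply, mul_add]
      rw [heq] at this
      convert this using 2
      have : ∫ u : AddCircle π, (G₁ + G₂) u = (∫ u : AddCircle π, G₁ u) + ∫ u : AddCircle π, G₂ u := by
        simp only [ContinuousMap.add_apply]
        exact integral_add (int_circle G₁) (int_circle G₂)
      rw [this]
      ring
    | smul c G _ h =>
      rw [hP] at h ⊢
      have := h.const_mul c
      have heq : (fun l : ℝ => c * ∫ x : ℝ, f x * G (l * x : ℝ)) =
          fun l : ℝ => ∫ x : ℝ, f x * (c • G) (l * x : ℝ) := by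
        funext l
        rw [← integral_const_mul]
        refine integral_congr_ae (Eventually.of_forall fun x => ?_)
        simp only [ContinuousMap.smul_apply, smul_eq_mul]
        ring
      rw [heq] at this
      convert this using 2
      have : ∫ u : AddCircle π, (c • G) u = c * ∫ u : AddCircle π, G u := by
        simp only [ContinuousMap.smul_apply, smul_eq_mul]
        exact integral_const_mul c _
      rw [this]
      ring
  -- density
  have hFmem : F ∈ closure ((Submodule.span ℂ (Set.range (@fourier π)) :
      Submodule ℂ C(AddCircle π, ℂ)) : Set C(AddCircle π, ℂ)) := by
    have := span_fourier_closure_eq_top (T := π)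
    rw [← Submodule.topologicalClosure_coe, this]
    trivial
  -- epsilon argument
  set If : ℝ := ∫ x : ℝ, ‖f x‖ with hIf
  have hIf0 : 0 ≤ If := integral_nonneg fun x => norm_nonneg _
  set C : ℝ := If + ‖∫ x : ℝ, f x‖ + 1 with hC
  have hC0 : 0 < C := by positivity
  -- uniform bounds
  have hbound : ∀ (G H : C(AddCircle π, ℂ)) (l : ℝ),
      ‖(∫ x : ℝ, f x * G (l * x : ℝ)) - ∫ x : ℝ, f x * H (l * x : ℝ)‖ ≤ If * ‖G - H‖ := by
    intro G H l
    rw [← integral_sub (int_mul f hf hfs G l) (int_mul f hf hfs H l)]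
    calc ‖∫ x : ℝ, (f x * G (l * x : ℝ) - f x * H (l * x : ℝ))‖
        ≤ ∫ x : ℝ, ‖f x * G (l * x : ℝ) - f x * H (l * x : ℝ)‖ :=
          norm_integral_le_integral_norm _
      _ ≤ ∫ x : ℝ, ‖f x‖ * ‖G - H‖ := by
          refine integral_mono (((int_mul f hf hfs G l).sub
            (int_mul f hf hfs H l)).norm) (hfi.norm.mul_const _) fun x => ?_
          rw [← mul_sub, norm_mul]
          refine mul_le_mul_of_nonneg_left ?_ (norm_nonneg _)
          rw [← ContinuousMap.sub_apply]
          exact (G - H).norm_coe_le_norm _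
      _ = If * ‖G - H‖ := by rw [integral_mul_const]
  have hmean : ∀ G H : C(AddCircle π, ℂ),
      ‖(∫ u : AddCircle π, G u) / π - (∫ u : AddCircle π, H u) / π‖ ≤ ‖G - H‖ := by
    intro G H
    rw [div_sub_div_same, ← integral_sub (int_circle G) (int_circle H)]
    rw [norm_div]
    have h1 : ‖∫ u : AddCircle π, (G u - H u)‖ ≤ ‖G - H‖ * π := by
      have := norm_integral_le_of_norm_le_const (μ := (volume : Measure (AddCircle π)))
        (f := fun u => G u - H u) (C := ‖G - H‖)
        (Eventually.of_forall fun u => by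
          show ‖G u - H u‖ ≤ ‖G - H‖
          rw [← ContinuousMap.sub_apply]; exact (G - H).norm_coe_le_norm u)
      rwa [measureReal_def, AddCircle.measure_univ, ENNReal.toReal_ofReal Real.pi_pos.le] at this
    have hπ : ‖(π : ℂ)‖ = π := by
      rw [Complex.norm_real, Real.norm_eq_abs, abs_of_pos Real.pi_pos]
    rw [hπ, div_le_iff₀ Real.pi_pos]
    exact h1
  rw [Metric.tendsto_nhds]
  intro ε hε
  obtain ⟨q, hq_mem, hq_close⟩ := Metric.mem_closure_iff.1 hFmem (ε / (3 * C))
    (by positivity)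
  have hPq := hspan q hq_mem
  rw [hP] at hPq
  have hev := Metric.tendsto_nhds.1 hPq (ε / 3) (by positivity)
  refine hev.mono fun l hl => ?_
  have hd : dist F q = ‖F - q‖ := by rw [dist_eq_norm]
  rw [hd] at hq_close
  have key1 : ‖(∫ x : ℝ, f x * F (l * x : ℝ)) - ∫ x : ℝ, f x * q (l * x : ℝ)‖ < ε / 3 := by
    calc ‖(∫ x : ℝ, f x * F (l * x : ℝ)) - ∫ x : ℝ, f x * q (l * x : ℝ)‖
        ≤ If * ‖F - q‖ := hbound F q l
      _ ≤ C * ‖F - q‖ := by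
          refine mul_le_mul_of_nonneg_right ?_ (norm_nonneg _)
          rw [hC]; nlinarith [norm_nonneg (∫ x : ℝ, f x)]
      _ < C * (ε / (3 * C)) := by
          exact mul_lt_mul_of_pos_left hq_close hC0
      _ = ε / 3 := by field_simp
  have key3 : ‖((∫ u : AddCircle π, q u) / π) * (∫ x : ℝ, f x) -
      ((∫ u : AddCircle π, F u) / π) * (∫ x : ℝ, f x)‖ < ε / 3 := by
    rw [← sub_mul, norm_mul]
    calc ‖(∫ u : AddCircle π, q u) / (π : ℂ) - (∫ u : AddCircle π, F u) / π‖ * ‖∫ x : ℝ, f x‖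
        ≤ ‖q - F‖ * ‖∫ x : ℝ, f x‖ :=
          mul_le_mul_of_nonneg_right (hmean q F) (norm_nonneg _)
      _ ≤ ‖q - F‖ * C := by
          refine mul_le_mul_of_nonneg_left ?_ (norm_nonneg _)
          rw [hC]; nlinarith [hIf0]
      _ < (ε / (3 * C)) * C := by
          refine mul_lt_mul_of_pos_right ?_ hC0
          rwa [← norm_neg, neg_sub]
      _ = ε / 3 := by field_simp
  rw [dist_eq_norm] at hl ⊢
  calc ‖(∫ x : ℝ, f x * F (l * x : ℝ)) -
      ((∫ u : AddCircle π, F u) / π) * ∫ x : ℝ, f x‖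
      ≤ ‖(∫ x : ℝ, f x * F (l * x : ℝ)) - ∫ x : ℝ, f x * q (l * x : ℝ)‖ +
        ‖(∫ x : ℝ, f x * q (l * x : ℝ)) -
          ((∫ u : AddCircle π, F u) / π) * ∫ x : ℝ, f x‖ :=
        norm_sub_le_norm_sub_add_norm_sub _ _ _
    _ ≤ ‖(∫ x : ℝ, f x * F (l * x : ℝ)) - ∫ x : ℝ, f x * q (l * x : ℝ)‖ +
        (‖(∫ x : ℝ, f x * q (l * x : ℝ)) -
          ((∫ u : AddCircle π, q u) / π) * ∫ x : ℝ, f x‖ +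
        ‖((∫ u : AddCircle π, q u) / π) * (∫ x : ℝ, f x) -
          ((∫ u : AddCircle π, F u) / π) * ∫ x : ℝ, f x‖) := by
        gcongr
        exact norm_sub_le_norm_sub_add_norm_sub _ _ _
    _ < ε / 3 + (ε / 3 + ε / 3) := by
        gcongr
    _ = ε := by ring

/-- Key lemma, real version. -/
lemma keyR (f : ℝ → ℝ) (hf : Continuous f) (hfs : HasCompactSupport f)
    (g : ℝ → ℝ) (hg : Continuous g) (hgp : Function.Periodic g π) :
    Tendsto (fun l : ℝ => ∫ x : ℝ, f x * g (l * x)) atTop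
      (𝓝 (((∫ u in Set.Ioc (0:ℝ) π, g u) / π) * ∫ x : ℝ, f x)) := by
  have hlift : Continuous hgp.lift := hg.quotient_liftOn' _
  set F : C(AddCircle π, ℂ) := ⟨fun u => (hgp.lift u : ℂ),
    Complex.continuous_ofReal.comp hlift⟩ with hF
  have hfc : Continuous fun x : ℝ => (f x : ℂ) := Complex.continuous_ofReal.comp hf
  have hfcs : HasCompactSupport fun x : ℝ => (f x : ℂ) :=
    hfs.comp_left (g := Complex.ofReal) Complex.ofReal_zero
  have h := keyC _ hfc hfcs F
  have hFcoe : ∀ x : ℝ, F ((x : ℝ) : AddCircle π) = (g x : ℂ) := by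
    intro x
    simp [hF, Function.Periodic.lift_coe]
  have hseq : (fun l : ℝ => ∫ x : ℝ, (f x : ℂ) * F (l * x : ℝ)) =
      fun l : ℝ => ((∫ x : ℝ, f x * g (l * x) : ℝ) : ℂ) := by
    funext l
    have h1 : ((∫ x : ℝ, f x * g (l * x) : ℝ) : ℂ) = ∫ x : ℝ, ((f x * g (l * x) : ℝ) : ℂ) :=
      (integral_ofReal).symm
    rw [h1]
    refine integral_congr_ae (Eventually.of_forall fun x => ?_)
    show (f x : ℂ) * F ((l * x : ℝ) : AddCircle π) = ((f x * g (l * x) : ℝ) : ℂ)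
    rw [hFcoe (l * x)]
    push_cast
    ring
  have hmean : (∫ u : AddCircle π, F u) = ((∫ u in Set.Ioc (0:ℝ) π, g u : ℝ) : ℂ) := by
    rw [← AddCircle.integral_preimage π 0 (F : AddCircle π → ℂ), zero_add]
    have h1 : ((∫ u in Set.Ioc (0:ℝ) π, g u : ℝ) : ℂ) = ∫ u in Set.Ioc (0:ℝ) π, ((g u : ℝ) : ℂ) :=
      (integral_ofReal).symm
    rw [h1]
    refine setIntegral_congr_ae measurableSet_Ioc (Eventually.of_forall fun x _ => ?_)
    show F ((x : ℝ) : AddCircle π) = ((g x : ℝ) : ℂ)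
    rw [hFcoe x]
  rw [hseq, hmean] at h
  have hlim : ((((∫ u in Set.Ioc (0:ℝ) π, g u : ℝ) : ℂ)) / π) * (∫ x : ℝ, (f x : ℂ)) =
      (((((∫ u in Set.Ioc (0:ℝ) π, g u) / π) * ∫ x : ℝ, f x : ℝ)) : ℂ) := by
    have h1 : (∫ x : ℝ, (f x : ℂ)) = ((∫ x : ℝ, f x : ℝ) : ℂ) := integral_ofReal
    rw [h1]
    push_cast
    ring
  rw [hlim] at h
  have := (Complex.continuous_re.tendsto _).comp h
  simpa [Function.comp_def] using this

end Stmt4Aux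

open Stmt4Aux in
theorem stmt4 (p : ℝ) (hp : 1 ≤ p) (ψ : ℝ → ℝ) (hc : Continuous ψ)
    (hs : HasCompactSupport ψ) :
    Tendsto (fun lam : ℝ => (∫ x : ℝ, |ψ x * Real.cos (lam * x)| ^ p) ^ (1/p)) atTop
      (𝓝 ((((∫ x in Set.Ioc (0:ℝ) π, |Real.cos x| ^ p) / π) ^ (1/p)) *
        (∫ x : ℝ, |ψ x| ^ p) ^ (1/p))) := by
  have hp0 : 0 < p := lt_of_lt_of_le one_pos hp
  set f : ℝ → ℝ := fun x => |ψ x| ^ p with hf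
  set g : ℝ → ℝ := fun x => |Real.cos x| ^ p with hg
  have hfc : Continuous f := (hc.abs).rpow_const fun x => Or.inr hp0.le
  have hfs : HasCompactSupport f := by
    refine hs.comp_left (g := fun y => |y| ^ p) ?_
    simp [Real.zero_rpow hp0.ne']
  have hgc : Continuous g := (Real.continuous_cos.abs).rpow_const fun x => Or.inr hp0.le
  have hgp : Function.Periodic g π := by
    intro x
    simp [hg, Real.cos_add_pi]
  have key := keyR f hfc hfs g hgc hgp
  have heq : ∀ lam : ℝ, (∫ x : ℝ, |ψ x * Real.cos (lam * x)| ^ p) =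
      ∫ x : ℝ, f x * g (lam * x) := by
    intro lam
    refine integral_congr_ae (Eventually.of_forall fun x => ?_)
    show |ψ x * Real.cos (lam * x)| ^ p = f x * g (lam * x)
    rw [abs_mul, Real.mul_rpow (abs_nonneg _) (abs_nonneg _)]
  have hM0 : 0 ≤ ∫ x in Set.Ioc (0:ℝ) π, |Real.cos x| ^ p :=
    setIntegral_nonneg measurableSet_Ioc fun x _ => Real.rpow_nonneg (abs_nonneg _) _
  have hI0 : 0 ≤ ∫ x : ℝ, |ψ x| ^ p :=
    integral_nonneg fun x => Real.rpow_nonneg (abs_nonneg _) _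
  have hrw : (((∫ x in Set.Ioc (0:ℝ) π, |Real.cos x| ^ p) / π) ^ (1/p)) *
      (∫ x : ℝ, |ψ x| ^ p) ^ (1/p) =
      (((∫ x in Set.Ioc (0:ℝ) π, |Real.cos x| ^ p) / π) * ∫ x : ℝ, |ψ x| ^ p) ^ (1/p) := by
    rw [← Real.mul_rpow (div_nonneg hM0 Real.pi_pos.le) hI0]
  rw [hrw]
  have := key.rpow_const (p := 1/p) (Or.inr (by positivity))
  refine this.congr fun lam => ?_
  rw [heq lam]
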